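/- arXiv:1507.06843 — 6 statements merged into one kernel-verified Lean document; each statement's English description precedes it below -/
import Mathlib

section
/- Let 0 < k ≤ n, let D be a k×k positive definite matrix, and let x = [[D, 0],[0, 0]] ∈ S_n. Then the tangent cone of K_n at x, i.e. the closure of the cone of feasible directions dir(x,K_n) = {d ∈ S_n : ∃ t > 0 with x + t d ∈ K_n}, equals the set of all symmetric matrices d ∈ S_n whose lower-right (n−k)×(n−k) principal submatrix π̄_k(d) is positive semidefinite. -/
open Matrix

attribute [local instance] Matrix.frobeniusNormedAddCommGroup

noncomputable section

abbrev MS (n : ℕ) := Matrix (Fin n) (Fin n) ℝ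

/-- The principal submatrix of `x` with rows and columns in `[a, b)`; for `a = k`,
`b = n` this is `π̄_k(x)`, the lower-right `(n−k)×(n−k)` principal submatrix. -/
def blk (n a b : ℕ) (x : MS n) : Matrix (Fin (b - a)) (Fin (b - a)) ℝ :=
  fun i j => if h : a + i.1 < n ∧ a + j.1 < n then x ⟨a + i.1, h.1⟩ ⟨a + j.1, h.2⟩ else 0

/-- `x = [[D, 0], [0, 0]]` with `D` the positive definite block in rows/columns `[a, b)`. -/
def staircase (n a b : ℕ) (x : MS n) : Prop :=
  (blk n a b x).PosDef ∧
    ∀ i j : Fin n, a ≤ i.1 → a ≤ j.1 → (b ≤ i.1 ∨ b ≤ j.1) → x i j = 0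

attribute [local instance] Matrix.frobeniusNormedSpace

lemma herm_smul {m : Type*} [Fintype m] (t : ℝ) {M : Matrix m m ℝ}
    (hM : M.IsHermitian) : (t • M).IsHermitian := by
  unfold Matrix.IsHermitian
  ext i j
  simp only [conjTranspose_apply, Matrix.smul_apply, star_trivial, smul_eq_mul]
  rw [show M j i = M i j from by simpa using hM.apply i j]

lemma psd_smul {m : Type*} [Fintype m] {t : ℝ} (ht : 0 ≤ t) {M : Matrix m m ℝ}
    (hM : M.PosSemidef) : (t • M).PosSemidef := by
  refine .of_dotProduct_mulVec_nonneg (herm_smul t hM.1) fun v => ?_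
  have := hM.dotProduct_mulVec_nonneg v
  simpa [Matrix.smul_mulVec, dotProduct_smul] using mul_nonneg ht this

lemma pd_smul {m : Type*} [Fintype m] {t : ℝ} (ht : 0 < t) {M : Matrix m m ℝ}
    (hM : M.PosDef) : (t • M).PosDef := by
  refine .of_dotProduct_mulVec_pos (herm_smul t hM.1) fun v hv => ?_
  have := hM.dotProduct_mulVec_pos hv
  simpa [Matrix.smul_mulVec, dotProduct_smul] using mul_pos ht this

lemma psd_of_smul {m : Type*} [Fintype m] {t : ℝ} (ht : 0 < t) {M : Matrix m m ℝ}
    (hM : (t • M).PosSemidef) : M.PosSemidef := by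
  have := psd_smul (t := t⁻¹) (by positivity) hM
  rwa [smul_smul, inv_mul_cancel₀ ht.ne', one_smul] at this

-- Lemma B : quadratic form bound via entry sum, sup norm on vectors
lemma quad_bound {m : ℕ} (Q : Matrix (Fin m) (Fin m) ℝ) (v : Fin m → ℝ) :
    |v ⬝ᵥ Q *ᵥ v| ≤ (∑ i, ∑ j, |Q i j|) * (‖v‖ * ‖v‖) := by
  rw [dotProduct, Finset.sum_mul]
  refine (Finset.abs_sum_le_sum_abs _ _).trans (Finset.sum_le_sum fun i _ => ?_)
  rw [Matrix.mulVec, dotProduct, Finset.mul_sum, Finset.sum_mul]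
  refine (Finset.abs_sum_le_sum_abs _ _).trans (Finset.sum_le_sum fun j _ => ?_)
  rw [abs_mul, abs_mul]
  calc |v i| * (|Q i j| * |v j|) = |Q i j| * (|v i| * |v j|) := by ring
    _ ≤ |Q i j| * (‖v‖ * ‖v‖) := by
        refine mul_le_mul_of_nonneg_left ?_ (abs_nonneg _)
        exact mul_le_mul (norm_le_pi_norm v i) (norm_le_pi_norm v j) (abs_nonneg _) (norm_nonneg _)

lemma coercive {m : ℕ} {D : Matrix (Fin m) (Fin m) ℝ} (hD : D.PosDef) :
    ∃ c : ℝ, 0 < c ∧ ∀ v : Fin m → ℝ, c * (‖v‖ * ‖v‖) ≤ v ⬝ᵥ D *ᵥ v := by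
  rcases Nat.eq_zero_or_pos m with hm | hm
  · subst hm
    refine ⟨1, one_pos, fun v => ?_⟩
    have hv : v = 0 := Subsingleton.elim _ _
    have h0 : ‖v‖ = 0 := by rw [hv, norm_zero]
    rw [h0]
    simp [dotProduct]
  · have : Nonempty (Fin m) := ⟨⟨0, hm⟩⟩
    have hsph : (Metric.sphere (0 : Fin m → ℝ) 1).Nonempty :=
      NormedSpace.sphere_nonempty.mpr zero_le_one
    have hcomp : IsCompact (Metric.sphere (0 : Fin m → ℝ) 1) := isCompact_sphere 0 1
    have hcont : Continuous fun v : Fin m → ℝ => v ⬝ᵥ D *ᵥ v := by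
      show Continuous fun v : Fin m → ℝ => ∑ i, v i * ∑ j, D i j * v j
      exact continuous_finset_sum _ fun i _ => (continuous_apply i).mul
        (continuous_finset_sum _ fun j _ => continuous_const.mul (continuous_apply j))
    obtain ⟨v₀, hv₀mem, hv₀min⟩ := hcomp.exists_isMinOn hsph hcont.continuousOn
    have hv₀norm : ‖v₀‖ = 1 := by simpa using hv₀mem
    have hv₀ne : v₀ ≠ 0 := by
      intro h; rw [h] at hv₀norm; simp at hv₀norm
    set c := v₀ ⬝ᵥ D *ᵥ v₀ with hc
    have hcpos : 0 < c := by simpa using hD.dotProduct_mulVec_pos hv₀ne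
    refine ⟨c, hcpos, fun v => ?_⟩
    rcases eq_or_ne v 0 with rfl | hv
    · simp
    · set r := ‖v‖ with hr
      have hrpos : 0 < r := norm_pos_iff.mpr hv
      set u := r⁻¹ • v with hu
      have hunorm : u ∈ Metric.sphere (0 : Fin m → ℝ) 1 := by
        simp [hu, norm_smul, abs_of_pos hrpos, inv_mul_cancel₀ hrpos.ne', ← hr]
      have hscale : v ⬝ᵥ D *ᵥ v = (r * r) * (u ⬝ᵥ D *ᵥ u) := by
        have hv' : v = r • u := by
          rw [hu, smul_smul, mul_inv_cancel₀ hrpos.ne', one_smul]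
        rw [hv', Matrix.mulVec_smul, smul_dotProduct, dotProduct_smul,
          smul_eq_mul, smul_eq_mul]
        ring
      rw [hscale]
      have h2 := hv₀min hunorm
      calc c * (r * r) ≤ (u ⬝ᵥ D *ᵥ u) * (r * r) :=
            mul_le_mul_of_nonneg_right h2 (by positivity)
        _ = (r * r) * (u ⬝ᵥ D *ᵥ u) := by ring

-- perturbation lemma
lemma perturb {m : ℕ} {P C : Matrix (Fin m) (Fin m) ℝ} (hP : P.PosDef) (hC : C.IsHermitian) :
    ∃ t : ℝ, 0 < t ∧ (P + t • C).PosSemidef := by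
  obtain ⟨c, hc, hcoer⟩ := coercive hP
  set K := ∑ i, ∑ j, |C i j| with hK
  have hKnn : 0 ≤ K := Finset.sum_nonneg fun i _ => Finset.sum_nonneg fun j _ => abs_nonneg _
  refine ⟨c / (K + 1), by positivity, ?_⟩
  refine .of_dotProduct_mulVec_nonneg (hP.1.add (herm_smul _ hC)) fun v => ?_
  have hquad := quad_bound C v
  have hb : -((c / (K + 1)) * (K * (‖v‖ * ‖v‖))) ≤ (c / (K + 1)) * (v ⬝ᵥ C *ᵥ v) := by
    rw [neg_le, ← mul_neg]
    refine mul_le_mul_of_nonneg_left ?_ (by positivity)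
    have := (abs_le.mp hquad).1
    linarith
  have key : 0 ≤ v ⬝ᵥ P *ᵥ v + (c / (K + 1)) * (v ⬝ᵥ C *ᵥ v) := by
    have h1 := hcoer v
    have h2 : (c / (K + 1)) * (K * (‖v‖ * ‖v‖)) ≤ c * (‖v‖ * ‖v‖) := by
      rw [div_mul_eq_mul_div, div_le_iff₀ (by positivity)]
      have hs : (0:ℝ) ≤ ‖v‖ * ‖v‖ := by positivity
      nlinarith [mul_nonneg hc.le hs]
    linarith
  simpa [Matrix.add_mulVec, dotProduct_add, Matrix.smul_mulVec,
    dotProduct_smul, smul_eq_mul] using key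



def spl (n k : ℕ) (h : k + (n - k) = n) : Fin k ⊕ Fin (n - k) ≃ Fin n :=
  finSumFinEquiv.trans (finCongr h)

lemma spl_inl (n k : ℕ) (h : k + (n - k) = n) (i : Fin k) :
    (spl n k h (Sum.inl i) : ℕ) = i.1 := by
  simp [spl]

lemma spl_inr (n k : ℕ) (h : k + (n - k) = n) (j : Fin (n - k)) :
    (spl n k h (Sum.inr j) : ℕ) = k + j.1 := by
  simp [spl]

lemma toB22 (n k : ℕ) (h : k + (n - k) = n) (M : MS n) :
    (M.submatrix (spl n k h) (spl n k h)).toBlocks₂₂ = blk n k n M := by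
  ext i j
  have hi2 := i.2
  have hj2 := j.2
  have hi : k + i.1 < n := by omega
  have hj : k + j.1 < n := by omega
  rw [blk]
  rw [dif_pos ⟨hi, hj⟩]
  show M (spl n k h (Sum.inr i)) (spl n k h (Sum.inr j)) = _
  congr 1 <;> exact Fin.ext (by simp [spl_inr])

lemma toB11 (n k : ℕ) (hkn : k ≤ n) (h : k + (n - k) = n) (M : MS n) :
    (M.submatrix (spl n k h) (spl n k h)).toBlocks₁₁ = blk n 0 k M := by
  ext i j
  have hi2 := i.2
  have hj2 := j.2
  have hi : 0 + i.1 < n := by omega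
  have hj : 0 + j.1 < n := by omega
  rw [blk]
  rw [dif_pos ⟨hi, hj⟩]
  show M (spl n k h (Sum.inl i)) (spl n k h (Sum.inl j)) = _
  congr 1 <;> exact Fin.ext (by simp [spl_inl])



-- blk is linear
lemma blk_add (n a b : ℕ) (x y : MS n) :
    blk n a b (x + y) = blk n a b x + blk n a b y := by
  ext i j
  simp only [blk, Matrix.add_apply]
  split <;> simp

lemma blk_smul (n a b : ℕ) (c : ℝ) (x : MS n) :
    blk n a b (c • x) = c • blk n a b x := by
  ext i j
  simp only [blk, Matrix.smul_apply]
  split <;> simp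

def blkL (n a b : ℕ) : MS n →ₗ[ℝ] Matrix (Fin (b - a)) (Fin (b - a)) ℝ where
  toFun := blk n a b
  map_add' := blk_add n a b
  map_smul' := blk_smul n a b

def ctL (m : ℕ) : Matrix (Fin m) (Fin m) ℝ →ₗ[ℝ] Matrix (Fin m) (Fin m) ℝ where
  toFun := fun M => Mᴴ
  map_add' := fun M N => conjTranspose_add M N
  map_smul' := fun c M => by simp [conjTranspose_smul]

def quadL (m : ℕ) (v : Fin m → ℝ) : Matrix (Fin m) (Fin m) ℝ →ₗ[ℝ] ℝ where
  toFun := fun M => star v ⬝ᵥ M *ᵥ v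
  map_add' := fun M N => by simp [Matrix.add_mulVec, dotProduct_add]
  map_smul' := fun c M => by simp [Matrix.smul_mulVec, dotProduct_smul]

lemma isClosed_psd (m : ℕ) : IsClosed {M : Matrix (Fin m) (Fin m) ℝ | M.PosSemidef} := by
  have hset : {M : Matrix (Fin m) (Fin m) ℝ | M.PosSemidef}
      = {M | Mᴴ = M} ∩ ⋂ v : Fin m → ℝ, (quadL m v) ⁻¹' (Set.Ici 0) := by
    ext M
    simp only [Set.mem_setOf_eq, Set.mem_inter_iff, Set.mem_iInter, Set.mem_preimage,
      Set.mem_Ici]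
    exact ⟨fun h => ⟨h.1, fun v => h.dotProduct_mulVec_nonneg v⟩,
        fun h => .of_dotProduct_mulVec_nonneg h.1 fun v => h.2 v⟩
  rw [hset]
  refine IsClosed.inter ?_ (isClosed_iInter fun v => ?_)
  · exact isClosed_eq (ctL m).continuous_of_finiteDimensional continuous_id
  · exact IsClosed.preimage (quadL m v).continuous_of_finiteDimensional isClosed_Ici

lemma isClosed_symm (n : ℕ) : IsClosed {d : MS n | d.IsSymm} := by
  have : {d : MS n | d.IsSymm} = {d | dᴴ = d} := by
    ext M
    simp only [Set.mem_setOf_eq, Matrix.IsSymm, conjTranspose_eq_transpose_of_trivial]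
  rw [this]
  exact isClosed_eq (ctL n).continuous_of_finiteDimensional continuous_id

lemma isClosed_target (n k : ℕ) :
    IsClosed {d : MS n | d.IsSymm ∧ (blk n k n d).PosSemidef} := by
  have : {d : MS n | d.IsSymm ∧ (blk n k n d).PosSemidef}
      = {d : MS n | d.IsSymm} ∩ (blkL n k n) ⁻¹' {M | M.PosSemidef} := by
    ext M; rfl
  rw [this]
  exact (isClosed_symm n).inter
    (IsClosed.preimage (blkL n k n).continuous_of_finiteDimensional (isClosed_psd _))

/-- For `x = [[D, 0], [0, 0]]` with `D` a `k×k` positive definite matrix (`0 < k ≤ n`),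
the tangent cone of `K_n` at `x` — the closure (in the Frobenius norm topology) of the
cone of feasible directions `{d ∈ S_n : ∃ t > 0, x + t d ∈ K_n}` — is exactly the set
of symmetric matrices `d` whose lower-right `(n−k)×(n−k)` principal submatrix
`π̄_k(d)` is positive semidefinite. -/
theorem stmt13 (n k : ℕ) (hk : 0 < k) (hkn : k ≤ n)
    (x : MS n) (hx : staircase n 0 k x) :
    closure {d : MS n | d.IsSymm ∧ ∃ t : ℝ, 0 < t ∧ (x + t • d).PosSemidef}
      = {d : MS n | d.IsSymm ∧ (blk n k n d).PosSemidef} := by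
  have h : k + (n - k) = n := Nat.add_sub_cancel' hkn
  set e := spl n k h with he
  apply Set.Subset.antisymm
  · refine closure_minimal ?_ (isClosed_target n k)
    rintro d ⟨hsym, t, ht, hpsd⟩
    refine ⟨hsym, ?_⟩
    have h1 : ((x + t • d).submatrix ⇑e ⇑e).toBlocks₂₂.PosSemidef :=
      hpsd.submatrix (fun i : Fin (n - k) => e (Sum.inr i))
    rw [toB22] at h1
    have hx0 : blk n k n x = 0 := by
      ext i j
      rw [blk]
      split
      · exact hx.2 _ _ (Nat.zero_le _) (Nat.zero_le _) (Or.inl (Nat.le_add_right _ _))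
      · simp
    rw [blk_add, blk_smul, hx0, zero_add] at h1
    exact psd_of_smul ht h1
  · rintro d ⟨hsym, hpsd⟩
    set Ek : MS n := (fromBlocks (0 : Matrix (Fin k) (Fin k) ℝ) 0 0
      (1 : Matrix (Fin (n - k)) (Fin (n - k)) ℝ)).submatrix ⇑e.symm ⇑e.symm with hEk
    have hEkspl : Ek.submatrix ⇑e ⇑e
        = fromBlocks (0 : Matrix (Fin k) (Fin k) ℝ) 0 0 1 := by
      rw [hEk, submatrix_submatrix]
      simp [Equiv.symm_comp_self]
    have hEksym : Ek.IsSymm := by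
      rw [Matrix.IsSymm, hEk, transpose_submatrix, fromBlocks_transpose]
      simp
    have hmem : ∀ ε : ℝ, 0 < ε →
        (d + ε • Ek) ∈ {d : MS n | d.IsSymm ∧ ∃ t : ℝ, 0 < t ∧ (x + t • d).PosSemidef} := by
      intro ε hε
      refine ⟨hsym.add (by rw [Matrix.IsSymm, transpose_smul, hEksym.eq]), ?_⟩
      -- block data
      set d' := d.submatrix ⇑e ⇑e with hd'
      have hd'symm : d'.IsHermitian := by
        rw [Matrix.IsHermitian, conjTranspose_eq_transpose_of_trivial, hd',
          transpose_submatrix, hsym.eq]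
      set A := d'.toBlocks₁₁ with hA
      set B := d'.toBlocks₁₂ with hB
      have hd'21 : d'.toBlocks₂₁ = Bᴴ := by
        ext i j
        show d' (Sum.inr i) (Sum.inl j) = star (d' (Sum.inl j) (Sum.inr i))
        exact (hd'symm.apply (Sum.inr i) (Sum.inl j)).symm
      have hd'22 : d'.toBlocks₂₂ = blk n k n d := toB22 n k h d
      have hAh : A.IsHermitian := by
        ext i j
        exact hd'symm.apply (Sum.inl i) (Sum.inl j)
      set G := blk n k n d + ε • (1 : Matrix (Fin (n - k)) (Fin (n - k)) ℝ) with hG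
      have hGpd : G.PosDef :=
        Matrix.PosDef.posSemidef_add hpsd (pd_smul hε Matrix.PosDef.one)
      haveI : Invertible G := G.invertibleOfIsUnitDet (isUnit_iff_ne_zero.mpr hGpd.det_pos.ne')
      have hGh : G⁻¹.IsHermitian := hGpd.1.inv
      set C := A - B * G⁻¹ * Bᴴ with hC
      have hCh : C.IsHermitian := hAh.sub (isHermitian_mul_mul_conjTranspose B hGh)
      set D0 := (x.submatrix ⇑e ⇑e).toBlocks₁₁ with hD0def
      have hD0 : D0.PosDef := by
        rw [hD0def, toB11 n k hkn h]
        exact hx.1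
      obtain ⟨t, ht, hPSD⟩ := perturb hD0 hCh
      refine ⟨t, ht, ?_⟩
      rw [← Matrix.posSemidef_submatrix_equiv e]
      have hge : ∀ j : Fin (n - k), k ≤ (e (Sum.inr j)).1 := fun j => by
        rw [he]
        have := spl_inr n k h j
        omega
      have h12 : (x.submatrix ⇑e ⇑e).toBlocks₁₂ = 0 := by
        ext i j
        show x (e (Sum.inl i)) (e (Sum.inr j)) = 0
        exact hx.2 _ _ (Nat.zero_le _) (Nat.zero_le _) (Or.inr (hge j))
      have h21 : (x.submatrix ⇑e ⇑e).toBlocks₂₁ = 0 := by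
        ext i j
        show x (e (Sum.inr i)) (e (Sum.inl j)) = 0
        exact hx.2 _ _ (Nat.zero_le _) (Nat.zero_le _) (Or.inl (hge i))
      have h22 : (x.submatrix ⇑e ⇑e).toBlocks₂₂ = 0 := by
        ext i j
        show x (e (Sum.inr i)) (e (Sum.inr j)) = 0
        exact hx.2 _ _ (Nat.zero_le _) (Nat.zero_le _) (Or.inl (hge i))
      have hxsub : x.submatrix ⇑e ⇑e = fromBlocks D0 0 0 0 := by
        rw [← fromBlocks_toBlocks (x.submatrix ⇑e ⇑e), h12, h21, h22]
      have hdsub : d' = fromBlocks A B Bᴴ (blk n k n d) := by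
        rw [← fromBlocks_toBlocks d', hd'21, hd'22]
      have hsplit : (x + t • (d + ε • Ek)).submatrix ⇑e ⇑e
          = x.submatrix ⇑e ⇑e + t • (d.submatrix ⇑e ⇑e + ε • Ek.submatrix ⇑e ⇑e) := by
        ext i j
        simp
      have hsub : (x + t • (d + ε • Ek)).submatrix ⇑e ⇑e
          = fromBlocks (D0 + t • A) (t • B) ((t • B)ᴴ) (t • G) := by
        rw [hsplit, hxsub, ← hd', hdsub, hEkspl, hG]
        rw [conjTranspose_smul, star_trivial]
        have hBh : Bᴴᵀ = Bᴴᵀ := rfl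
        simp only [fromBlocks_smul, fromBlocks_add, smul_zero, add_zero, zero_add]
      rw [hsub]
      haveI : Invertible (t • G) :=
        (t • G).invertibleOfIsUnitDet
          (isUnit_iff_ne_zero.mpr (pd_smul ht hGpd).det_pos.ne')
      rw [Matrix.PosDef.fromBlocks₂₂ _ _ (pd_smul ht hGpd)]
      have hGinv : (t • G)⁻¹ = t⁻¹ • G⁻¹ := by
        apply Matrix.inv_eq_right_inv
        rw [Matrix.smul_mul, Matrix.mul_smul, smul_smul, mul_inv_cancel₀ ht.ne',
          one_smul, Matrix.mul_nonsing_inv _ (isUnit_iff_ne_zero.mpr hGpd.det_pos.ne')]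
      have hschur : D0 + t • A - t • B * (t • G)⁻¹ * (t • B)ᴴ
          = D0 + t • C := by
        rw [hGinv, hC]
        have h1 : t • B * (t⁻¹ • G⁻¹) * (t • B)ᴴ = (t * t⁻¹ * t) • (B * G⁻¹ * Bᴴ) := by
          simp only [conjTranspose_smul, star_trivial, Matrix.smul_mul, Matrix.mul_smul,
            smul_smul]
          congr 1
          ring
        rw [h1, mul_inv_cancel₀ ht.ne', one_mul, smul_sub]
        abel
      rw [hschur]
      exact hPSD
    have htend : Filter.Tendsto (fun ε : ℝ => d + ε • Ek)
        (nhdsWithin 0 (Set.Ioi 0)) (nhds d) := by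
      have h2 : Filter.Tendsto (fun ε : ℝ => d + ε • Ek) (nhds 0)
          (nhds (d + (0 : ℝ) • Ek)) :=
        (continuous_const.add (continuous_id.smul continuous_const)).tendsto 0
      rw [zero_smul, add_zero] at h2
      exact h2.mono_left nhdsWithin_le_nhds
    exact mem_closure_of_tendsto htend
      (Filter.eventually_of_mem self_mem_nhdsWithin fun ε hε => hmem ε hε)
end
end

section
/- Let x ∈ K_n and let d belong to the tangent cone of K_n at x, i.e. the closure of {e ∈ S_n : ∃ t > 0 with x + t e ∈ K_n}. Then lim_{t→+∞} dist(t x + d, K_n) = 0, where dist(y, K_n) = inf{‖y − z‖ : z ∈ K_n} in the Frobenius norm. -/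
open Matrix

attribute [local instance] Matrix.frobeniusNormedAddCommGroup

noncomputable section

def PSD (n : ℕ) : Set (MS n) := {x | x.PosSemidef}

lemma psd_smul_s14 {n : ℕ} {M : MS n} (hM : M.PosSemidef) {c : ℝ} (hc : 0 ≤ c) :
    (c • M).PosSemidef := by
  refine ⟨by simp [IsHermitian, conjTranspose_smul, show Mᵀ = M from hM.1], fun v => ?_⟩
  have h := mul_nonneg hc (hM.2 v)
  simp only [Finsupp.mul_sum] at h
  refine le_of_le_of_eq h ?_
  simp only [Matrix.smul_apply, smul_eq_mul, star_trivial]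
  congr 1; funext i xi; congr 1; funext j xj; ring

/-- If `x ∈ K_n` and `d` belongs to the tangent cone of `K_n` at `x`, i.e. to the
closure (in the Frobenius norm topology) of `{e ∈ S_n : ∃ t > 0, x + t e ∈ K_n}`,
then `dist(t x + d, K_n) → 0` as `t → +∞`. -/
theorem stmt14 (n : ℕ) (x : MS n) (hx : x.PosSemidef) (d : MS n)
    (hd : d ∈ closure {e : MS n | e.IsSymm ∧ ∃ t : ℝ, 0 < t ∧ (x + t • e).PosSemidef}) :
    Filter.Tendsto (fun t : ℝ => Metric.infDist (t • x + d) (PSD n))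
      Filter.atTop (nhds 0) := by
  rw [Metric.tendsto_atTop]
  intro ε hε
  obtain ⟨e, he, hde⟩ := Metric.mem_closure_iff.mp hd ε hε
  obtain ⟨-, s, hs, hpsd⟩ := he
  refine ⟨s⁻¹, fun t ht => ?_⟩
  have hmem : (t • x + e) ∈ PSD n := by
    have heq : t • x + e = (t - s⁻¹) • x + s⁻¹ • (x + s • e) := by
      rw [smul_add, smul_smul, inv_mul_cancel₀ hs.ne', one_smul, sub_smul]
      abel
    show (t • x + e).PosSemidef
    rw [heq]
    exact (psd_smul_s14 hx (by linarith)).add (psd_smul_s14 hpsd (by positivity))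
  have hle : Metric.infDist (t • x + d) (PSD n) ≤ dist d e := by
    calc Metric.infDist (t • x + d) (PSD n) ≤ dist (t • x + d) (t • x + e) :=
          Metric.infDist_le_dist_of_mem hmem
      _ = dist d e := dist_add_left _ _ _
  have hnn : 0 ≤ Metric.infDist (t • x + d) (PSD n) := Metric.infDist_nonneg
  rw [Real.dist_eq, sub_zero, abs_of_nonneg hnn]
  linarith
end
end

section
/- Let k₁,…,k_m be positive integers with N_i = k₁+⋯+k_i, N_m ≤ n (set N₀ = 0), and let A₁,…,A_m ∈ S_n have the staircase shape: for each i, the lower-right (n−N_{i−1})×(n−N_{i−1}) principal submatrix of A_i equals [[Â_i, 0],[0, 0]] for some k_i×k_i positive definite matrix Â_i. Let c' ∈ S_n be such that its lower-right (n−N_m)×(n−N_m) principal submatrix π̄_{N_m}(c') is positive semidefinite. Then for every ε > 0 there exist nonnegative reals α₁,…,α_m such that dist(c' + α₁A₁ + ⋯ + α_mA_m, K_n) < ε; in particular, inf over α₁,…,α_m ≥ 0 of dist(c' + Σ_i α_iA_i, K_n) equals 0. -/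
open Matrix

attribute [local instance] Matrix.frobeniusNormedAddCommGroup

attribute [local instance] Matrix.frobeniusNormSMulClass

noncomputable section

/-! ### Auxiliary lemmas -/

def restr (n a b : ℕ) (u : Fin n → ℝ) : Fin (b - a) → ℝ :=
  fun i => if h : a + i.1 < n then u ⟨a + i.1, h⟩ else 0

lemma dot_self_nonneg {n : ℕ} (x : Fin n → ℝ) : 0 ≤ x ⬝ᵥ x :=
  Finset.sum_nonneg fun _ _ => mul_self_nonneg _

lemma dot_self_pos {n : ℕ} {x : Fin n → ℝ} (hx : x ≠ 0) : 0 < x ⬝ᵥ x := by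
  obtain ⟨i, hi⟩ := Function.ne_iff.mp hx
  exact Finset.sum_pos' (fun j _ => mul_self_nonneg _)
    ⟨i, Finset.mem_univ i, mul_self_pos.mpr hi⟩

lemma star_eq_self {n : ℕ} (x : Fin n → ℝ) : star x = x := by
  funext i; exact star_trivial _

lemma abs_le_sqrt_dot {n : ℕ} (x : Fin n → ℝ) (p : Fin n) :
    |x p| ≤ Real.sqrt (x ⬝ᵥ x) := by
  have h1 : |x p| ^ 2 ≤ x ⬝ᵥ x := by
    rw [sq_abs, sq]
    exact Finset.single_le_sum (f := fun j => x j * x j)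
      (fun j _ => mul_self_nonneg _) (Finset.mem_univ p)
  calc |x p| = Real.sqrt (|x p| ^ 2) := (Real.sqrt_sq (abs_nonneg _)).symm
    _ ≤ Real.sqrt (x ⬝ᵥ x) := Real.sqrt_le_sqrt h1

lemma bilin_bound {n : ℕ} (M : Matrix (Fin n) (Fin n) ℝ) (x y : Fin n → ℝ) :
    |x ⬝ᵥ M *ᵥ y| ≤ (∑ p, ∑ q, |M p q|) * (Real.sqrt (x ⬝ᵥ x) * Real.sqrt (y ⬝ᵥ y)) := by
  set sx := Real.sqrt (x ⬝ᵥ x) with hsx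
  set sy := Real.sqrt (y ⬝ᵥ y) with hsy
  have hsx0 : 0 ≤ sx := Real.sqrt_nonneg _
  have hsy0 : 0 ≤ sy := Real.sqrt_nonneg _
  have : x ⬝ᵥ M *ᵥ y = ∑ p, ∑ q, x p * (M p q * y q) := by
    simp only [dotProduct, Matrix.mulVec, Finset.mul_sum]
  rw [this]
  calc |∑ p, ∑ q, x p * (M p q * y q)| ≤ ∑ p, ∑ q, |x p * (M p q * y q)| := by
        refine (Finset.abs_sum_le_sum_abs _ _).trans ?_
        exact Finset.sum_le_sum fun p _ => Finset.abs_sum_le_sum_abs _ _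
    _ ≤ ∑ p, ∑ q, |M p q| * (sx * sy) := by
        refine Finset.sum_le_sum fun p _ => Finset.sum_le_sum fun q _ => ?_
        rw [abs_mul, abs_mul]
        calc |x p| * (|M p q| * |y q|) = |M p q| * (|x p| * |y q|) := by ring
          _ ≤ |M p q| * (sx * sy) := by
              refine mul_le_mul_of_nonneg_left ?_ (abs_nonneg _)
              exact mul_le_mul (abs_le_sqrt_dot x p) (abs_le_sqrt_dot y q) (abs_nonneg _) hsx0
    _ = (∑ p, ∑ q, |M p q|) * (sx * sy) := by rw [Finset.sum_mul]; simp [Finset.sum_mul]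

lemma posdef_coercive {d : ℕ} {B : Matrix (Fin d) (Fin d) ℝ} (hB : B.PosDef) :
    ∃ lam : ℝ, 0 < lam ∧ ∀ x : Fin d → ℝ, lam * (x ⬝ᵥ x) ≤ x ⬝ᵥ B *ᵥ x := by
  by_cases hd : ∀ x : Fin d → ℝ, x = 0
  · refine ⟨1, one_pos, fun x => ?_⟩
    rw [hd x]; simp
  · push_neg at hd
    obtain ⟨x₀, hx₀⟩ := hd
    set S : Set (Fin d → ℝ) := {x | x ⬝ᵥ x = 1} with hS
    have hcont : Continuous fun x : Fin d → ℝ => x ⬝ᵥ x := by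
      unfold dotProduct
      exact continuous_finset_sum _ fun i _ => (continuous_apply i).mul (continuous_apply i)
    have hfcont : Continuous fun x : Fin d → ℝ => x ⬝ᵥ B *ᵥ x := by
      unfold dotProduct Matrix.mulVec
      exact continuous_finset_sum _ fun i _ => (continuous_apply i).mul
        (continuous_finset_sum _ fun j _ => (continuous_const.mul (continuous_apply j)))
    have hclosed : IsClosed S := isClosed_eq hcont continuous_const
    have hsub : S ⊆ Metric.closedBall 0 1 := by
      intro x hx
      rw [Metric.mem_closedBall, dist_zero_right]
      rw [pi_norm_le_iff_of_nonneg zero_le_one]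
      intro i
      rw [Real.norm_eq_abs]
      refine abs_le_one_iff_mul_self_le_one.mpr ?_
      calc x i * x i ≤ x ⬝ᵥ x :=
            Finset.single_le_sum (f := fun j => x j * x j)
              (fun j _ => mul_self_nonneg _) (Finset.mem_univ i)
        _ = 1 := hx
    have hcpt : IsCompact S :=
      (isCompact_closedBall (0 : Fin d → ℝ) 1).of_isClosed_subset hclosed hsub
    have hmem : ∀ x : Fin d → ℝ, x ≠ 0 → ((Real.sqrt (x ⬝ᵥ x))⁻¹ • x) ∈ S := by
      intro x hx
      have hp : 0 < x ⬝ᵥ x := dot_self_pos hx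
      have hs : Real.sqrt (x ⬝ᵥ x) ≠ 0 := by positivity
      show ((Real.sqrt (x ⬝ᵥ x))⁻¹ • x) ⬝ᵥ ((Real.sqrt (x ⬝ᵥ x))⁻¹ • x) = 1
      rw [smul_dotProduct, dotProduct_smul, smul_eq_mul, smul_eq_mul]
      field_simp
      rw [Real.sq_sqrt hp.le]
    have hne : S.Nonempty := ⟨_, hmem x₀ hx₀⟩
    obtain ⟨z, hzS, hzmin'⟩ := hcpt.exists_isMinOn hne hfcont.continuousOn
    have hzmin : ∀ y ∈ S, z ⬝ᵥ B *ᵥ z ≤ y ⬝ᵥ B *ᵥ y := fun y hy => hzmin' hy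
    have hz1 : z ⬝ᵥ z = 1 := hzS
    have hz0 : z ≠ 0 := by
      intro h; rw [h] at hz1; simp at hz1
    have hlam : 0 < z ⬝ᵥ B *ᵥ z := by
      have := hB.dotProduct_mulVec_pos hz0
      rwa [star_eq_self] at this
    refine ⟨z ⬝ᵥ B *ᵥ z, hlam, fun x => ?_⟩
    by_cases hx : x = 0
    · rw [hx]; simp
    · have hp : 0 < x ⬝ᵥ x := dot_self_pos hx
      have hmin := hzmin _ (hmem x hx)
      have hsq : Real.sqrt (x ⬝ᵥ x) * Real.sqrt (x ⬝ᵥ x) = x ⬝ᵥ x := Real.mul_self_sqrt hp.le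
      have hexp : ((Real.sqrt (x ⬝ᵥ x))⁻¹ • x) ⬝ᵥ B *ᵥ ((Real.sqrt (x ⬝ᵥ x))⁻¹ • x)
          = (x ⬝ᵥ x)⁻¹ * (x ⬝ᵥ B *ᵥ x) := by
        rw [smul_dotProduct, Matrix.mulVec_smul, dotProduct_smul, smul_eq_mul, smul_eq_mul,
          ← mul_assoc, ← mul_inv, hsq]
      rw [hexp] at hmin
      rw [mul_comm]
      calc (x ⬝ᵥ x) * (z ⬝ᵥ B *ᵥ z) ≤ (x ⬝ᵥ x) * ((x ⬝ᵥ x)⁻¹ * (x ⬝ᵥ B *ᵥ x)) :=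
            mul_le_mul_of_nonneg_left hmin hp.le
        _ = x ⬝ᵥ B *ᵥ x := by field_simp

lemma sum_restr {n a b : ℕ} (hab : a ≤ b) (hbn : b ≤ n) (f : Fin n → ℝ)
    (hf : ∀ p : Fin n, p.1 < a ∨ b ≤ p.1 → f p = 0) :
    ∑ p, f p = ∑ i : Fin (b - a), f ⟨a + i.1, by omega⟩ := by
  have h1 : ∑ p, f p = ∑ p ∈ Finset.univ.filter (fun p : Fin n => a ≤ p.1 ∧ p.1 < b), f p := by
    symm
    refine Finset.sum_filter_of_ne fun p _ hp => ?_
    by_contra hc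
    push_neg at hc
    exact hp (hf p (by omega))
  rw [h1]
  refine (Finset.sum_bij' (fun p hp => (⟨p.1 - a, by
      simp only [Finset.mem_filter] at hp; omega⟩ : Fin (b - a)))
    (fun i _ => (⟨a + i.1, by omega⟩ : Fin n)) ?_ ?_ ?_ ?_ ?_)
  · intro p hp; exact Finset.mem_univ _
  · intro i hi
    simp only [Finset.mem_filter]
    exact ⟨Finset.mem_univ _, by omega, by omega⟩
  · intro p hp
    simp only [Finset.mem_filter] at hp
    ext; simp; omega
  · intro i hi; ext; simp
  · intro p hp
    simp only [Finset.mem_filter] at hp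
    congr 1
    ext; simp; omega

lemma dot_restr {n a b : ℕ} (hab : a ≤ b) (hbn : b ≤ n) (u : Fin n → ℝ)
    (hu : ∀ p : Fin n, p.1 < a ∨ b ≤ p.1 → u p = 0) :
    u ⬝ᵥ u = (restr n a b u) ⬝ᵥ (restr n a b u) := by
  simp only [dotProduct]
  rw [sum_restr hab hbn (fun p => u p * u p)
    (fun p hp => by show u p * u p = 0; rw [hu p hp]; ring)]
  refine Finset.sum_congr rfl fun i _ => ?_
  have h : a + i.1 < n := by omega
  simp [restr, dif_pos h]

lemma quad_restr {n a b : ℕ} (hab : a ≤ b) (hbn : b ≤ n) (A : MS n) (u : Fin n → ℝ)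
    (hu : ∀ p : Fin n, p.1 < a ∨ b ≤ p.1 → u p = 0) :
    u ⬝ᵥ A *ᵥ u = (restr n a b u) ⬝ᵥ (blk n a b A) *ᵥ (restr n a b u) := by
  simp only [dotProduct, Matrix.mulVec]
  rw [sum_restr hab hbn (fun p => u p * ∑ q, A p q * u q)
    (fun p hp => by show u p * _ = 0; rw [hu p hp]; ring)]
  refine Finset.sum_congr rfl fun i _ => ?_
  have hi : a + i.1 < n := by omega
  have hinner : ∑ q, A ⟨a + i.1, by omega⟩ q * u q
      = ∑ j : Fin (b - a), A ⟨a + i.1, by omega⟩ ⟨a + j.1, by omega⟩ * u ⟨a + j.1, by omega⟩ := by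
    rw [sum_restr hab hbn (fun q => A ⟨a + i.1, by omega⟩ q * u q)
      (fun q hq => by show A _ q * u q = 0; rw [hu q hq]; ring)]
  rw [hinner]
  have hru : restr n a b u i = u ⟨a + i.1, hi⟩ := by simp [restr, dif_pos hi]
  rw [hru]
  congr 1
  refine Finset.sum_congr rfl fun j _ => ?_
  have hj : a + j.1 < n := by omega
  simp [blk, restr, dif_pos, hi, hj]

lemma dot_expand {n : ℕ} (A : MS n) (x y : Fin n → ℝ) :
    x ⬝ᵥ A *ᵥ y = ∑ p, ∑ q, x p * (A p q * y q) := by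
  simp only [dotProduct, Matrix.mulVec, Finset.mul_sum]

lemma cross_zero {n a b : ℕ} (hab : a ≤ b) (A : MS n)
    (hA : ∀ i j : Fin n, a ≤ i.1 → a ≤ j.1 → (b ≤ i.1 ∨ b ≤ j.1) → A i j = 0)
    (x y : Fin n → ℝ) (hx : ∀ p : Fin n, p.1 < a → x p = 0)
    (hy : ∀ p : Fin n, p.1 < b → y p = 0) :
    x ⬝ᵥ A *ᵥ y = 0 ∧ y ⬝ᵥ A *ᵥ x = 0 := by
  constructor
  · rw [dot_expand]
    refine Finset.sum_eq_zero fun p _ => Finset.sum_eq_zero fun q _ => ?_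
    by_cases hp : p.1 < a
    · rw [hx p hp]; ring
    · push_neg at hp
      by_cases hq : q.1 < b
      · rw [hy q hq]; ring
      · push_neg at hq
        rw [hA p q hp (by omega) (Or.inr hq)]; ring
  · rw [dot_expand]
    refine Finset.sum_eq_zero fun p _ => Finset.sum_eq_zero fun q _ => ?_
    by_cases hp : p.1 < b
    · rw [hy p hp]; ring
    · push_neg at hp
      by_cases hq : q.1 < a
      · rw [hx q hq]; ring
      · push_neg at hq
        rw [hA p q (by omega) hq (Or.inl hp)]; ring

lemma Nchain {N : ℕ → ℕ} {r : ℕ} (h : ∀ j < r, N j ≤ N (j + 1)) :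
    ∀ a b : ℕ, a ≤ b → b ≤ r → N a ≤ N b := by
  intro a b
  induction b with
  | zero => intro hab _; rw [Nat.le_zero.mp hab]
  | succ b ih =>
    intro hab hbr
    rcases Nat.eq_or_lt_of_le hab with h1 | h1
    · rw [h1]
    · exact le_trans (ih (by omega) (by omega)) (h b (by omega))

set_option maxHeartbeats 1000000 in
lemma key (n : ℕ) : ∀ (r : ℕ) (N : ℕ → ℕ) (A : ℕ → MS n) (c : MS n),
    (∀ j < r, N j ≤ N (j + 1)) → N r ≤ n →
    (∀ j < r, staircase n (N j) (N (j + 1)) (A j)) →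
    (∀ v : Fin n → ℝ, (∀ p : Fin n, p.1 < N r → v p = 0) → 0 ≤ v ⬝ᵥ c *ᵥ v) →
    ∀ ε : ℝ, 0 < ε → ∃ α : ℕ → ℝ, (∀ j < r, 0 ≤ α j) ∧
      ∀ v : Fin n → ℝ, (∀ p : Fin n, p.1 < N 0 → v p = 0) →
        -(ε * (v ⬝ᵥ v)) ≤ v ⬝ᵥ (c + ∑ j ∈ Finset.range r, α j • A j) *ᵥ v := by
  intro r
  induction r with
  | zero =>
    intro N A c _ _ _ hc ε hε
    refine ⟨0, by simp, fun v hv => ?_⟩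
    simp only [Finset.range_zero, Finset.sum_empty, add_zero]
    have h1 := hc v hv
    nlinarith [dot_self_nonneg v]
  | succ r ih =>
    intro N A c hmono hNn hstair hc ε hε
    have hst0 := hstair 0 (Nat.succ_pos r)
    obtain ⟨lam, hlam, hco⟩ := posdef_coercive hst0.1
    obtain ⟨α', hα'0, hα'⟩ := ih (fun j => N (j + 1)) (fun j => A (j + 1)) c
      (fun j hj => hmono (j + 1) (by omega)) hNn
      (fun j hj => hstair (j + 1) (by omega)) (fun v hv => hc v hv) (ε / 2) (half_pos hε)
    set M0 : MS n := c + ∑ j ∈ Finset.range r, α' j • A (j + 1) with hM0_def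
    set C : ℝ := ∑ p, ∑ q, |M0 p q| with hC_def
    have hC0 : 0 ≤ C := Finset.sum_nonneg fun p _ => Finset.sum_nonneg fun q _ => abs_nonneg _
    set K : ℝ := C + 1 with hK_def
    have hK : 0 < K := by linarith
    set t : ℝ := (K + 2 * K ^ 2 / ε) / lam with ht_def
    have ht0 : 0 ≤ t := by positivity
    refine ⟨fun j => match j with | 0 => t | .succ j => α' j, ?_, ?_⟩
    · intro j hj
      cases j with
      | zero => exact ht0
      | succ j => exact hα'0 j (by omega)
    · intro v hv
      have hsum : c + ∑ j ∈ Finset.range (r + 1),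
          (fun j => match j with | 0 => t | .succ j => α' j : ℕ → ℝ) j • A j
          = M0 + t • A 0 := by
        rw [Finset.sum_range_succ', hM0_def, ← add_assoc]
      set u : Fin n → ℝ := fun p => if p.1 < N 1 then v p else 0 with hu_def
      set w : Fin n → ℝ := fun p => if p.1 < N 1 then 0 else v p with hw_def
      have hN01 : N 0 ≤ N 1 := hmono 0 (by omega)
      have hN1n : N 1 ≤ n := le_trans (Nchain hmono 1 (r + 1) (by omega) le_rfl) hNn
      have hvuw : v = u + w := by
        funext p
        by_cases h : p.1 < N 1 <;> simp [hu_def, hw_def, h]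
      have hu_supp : ∀ p : Fin n, p.1 < N 0 ∨ N 1 ≤ p.1 → u p = 0 := by
        intro p hp
        rcases hp with hp | hp
        · simp only [hu_def]
          rw [if_pos (by omega)]
          exact hv p hp
        · simp only [hu_def]
          rw [if_neg (by omega)]
      have hu_supp' : ∀ p : Fin n, p.1 < N 0 → u p = 0 := fun p hp => hu_supp p (Or.inl hp)
      have hw_supp : ∀ p : Fin n, p.1 < N 1 → w p = 0 := by
        intro p hp; simp only [hw_def]; rw [if_pos hp]
      set a0 : ℝ := u ⬝ᵥ u with ha0_def
      set b0 : ℝ := w ⬝ᵥ w with hb0_def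
      have ha0 : 0 ≤ a0 := dot_self_nonneg u
      have hb0 : 0 ≤ b0 := dot_self_nonneg w
      set sx : ℝ := Real.sqrt a0 with hsx_def
      set sy : ℝ := Real.sqrt b0 with hsy_def
      have hsx0 : 0 ≤ sx := Real.sqrt_nonneg _
      have hsy0 : 0 ≤ sy := Real.sqrt_nonneg _
      have hsx2 : sx * sx = a0 := Real.mul_self_sqrt ha0
      have hsy2 : sy * sy = b0 := Real.mul_self_sqrt hb0
      have hvv' : (u + w) ⬝ᵥ (u + w) = a0 + b0 := by
        rw [add_dotProduct, dotProduct_add, dotProduct_add]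
        have huw : u ⬝ᵥ w = 0 := Finset.sum_eq_zero fun p _ => by
          by_cases h : p.1 < N 1
          · rw [hw_supp p h]; ring
          · rw [hu_supp p (Or.inr (by omega))]; ring
        have hwu : w ⬝ᵥ u = 0 := Finset.sum_eq_zero fun p _ => by
          by_cases h : p.1 < N 1
          · rw [hw_supp p h]; ring
          · rw [hu_supp p (Or.inr (by omega))]; ring
        rw [huw, hwu]; ring
      have hA0u : lam * a0 ≤ u ⬝ᵥ A 0 *ᵥ u := by
        rw [quad_restr hN01 hN1n (A 0) u hu_supp, ha0_def,
          dot_restr hN01 hN1n u hu_supp]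
        exact hco _
      have hcz := cross_zero hN01 (A 0) hst0.2 u w hu_supp' hw_supp
      have hww := cross_zero hN01 (A 0) hst0.2 w w
        (fun p hp => hw_supp p (by omega)) hw_supp
      have hM0w : -(ε / 2 * b0) ≤ w ⬝ᵥ M0 *ᵥ w := hα' w hw_supp
      have huu : -(K * a0) ≤ u ⬝ᵥ M0 *ᵥ u := by
        have h := bilin_bound M0 u u
        have h2 := neg_abs_le (u ⬝ᵥ M0 *ᵥ u)
        rw [← ha0_def, ← hsx_def] at h
        nlinarith
      have huw : -(K * (sx * sy)) ≤ u ⬝ᵥ M0 *ᵥ w := by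
        have h := bilin_bound M0 u w
        have h2 := neg_abs_le (u ⬝ᵥ M0 *ᵥ w)
        rw [← ha0_def, ← hb0_def, ← hsx_def, ← hsy_def] at h
        nlinarith [mul_nonneg hsx0 hsy0]
      have hwu : -(K * (sx * sy)) ≤ w ⬝ᵥ M0 *ᵥ u := by
        have h := bilin_bound M0 w u
        have h2 := neg_abs_le (w ⬝ᵥ M0 *ᵥ u)
        rw [← ha0_def, ← hb0_def, ← hsx_def, ← hsy_def] at h
        nlinarith [mul_nonneg hsx0 hsy0]
      have hcb : 2 * K * (sx * sy) ≤ ε / 2 * b0 + 2 * K ^ 2 / ε * a0 := by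
        have cert : (0:ℝ) ≤ (ε * sy - 2 * K * sx) ^ 2 / (2 * ε) := by positivity
        have certeq : (ε * sy - 2 * K * sx) ^ 2 / (2 * ε)
            = ε / 2 * (sy * sy) + 2 * K ^ 2 / ε * (sx * sx) - 2 * K * (sx * sy) := by
          field_simp
          ring
        rw [certeq, hsx2, hsy2] at cert
        linarith
      have htlam : t * lam = K + 2 * K ^ 2 / ε := by
        rw [ht_def]
        field_simp
      have htA0 : (K + 2 * K ^ 2 / ε) * a0 ≤ t * (u ⬝ᵥ A 0 *ᵥ u) := by
        rw [← htlam, mul_assoc]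
        exact mul_le_mul_of_nonneg_left hA0u ht0
      have hexpand : (u + w) ⬝ᵥ (M0 + t • A 0) *ᵥ (u + w) =
          u ⬝ᵥ M0 *ᵥ u + u ⬝ᵥ M0 *ᵥ w + w ⬝ᵥ M0 *ᵥ u + w ⬝ᵥ M0 *ᵥ w
          + t * (u ⬝ᵥ A 0 *ᵥ u) + t * (u ⬝ᵥ A 0 *ᵥ w) + t * (w ⬝ᵥ A 0 *ᵥ u)
          + t * (w ⬝ᵥ A 0 *ᵥ w) := by
        simp only [Matrix.add_mulVec, Matrix.mulVec_add, add_dotProduct, dotProduct_add,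
          Matrix.smul_mulVec, dotProduct_smul, smul_eq_mul]
        ring
      rw [hsum, hvuw, hvv', hexpand, hcz.1, hcz.2, hww.1]
      have hεa0 : 0 ≤ ε * a0 := mul_nonneg hε.le ha0
      clear_value M0 C K t u w a0 b0 sx sy
      linarith

/-- Given symmetric matrices `A 0, …, A (m−1)` in staircase shape with block sizes
`k 0, …, k (m−1)`, partial sums `N`, `N m ≤ n`, and a symmetric `c'` whose lower-right
`(n−N m)×(n−N m)` principal submatrix is positive semidefinite: for every `ε > 0`
there are nonnegative reals `α 0, …, α (m−1)` with
`dist(c' + Σ_i α i • A i, K_n) < ε`; in particular the infimum over all such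
nonnegative coefficients of this distance is `0`. -/
theorem stmt15 (n m : ℕ)
    (k : ℕ → ℕ) (hk : ∀ i < m, 0 < k i)
    (N : ℕ → ℕ) (hN0 : N 0 = 0) (hNsucc : ∀ i, N (i + 1) = N i + k i)
    (hNm : N m ≤ n)
    (A : ℕ → MS n) (hAsymm : ∀ i < m, (A i).IsSymm)
    (hstair : ∀ i < m, staircase n (N i) (N (i + 1)) (A i))
    (c' : MS n) (hc' : c'.IsSymm) (hc'blk : (blk n (N m) n c').PosSemidef) :
    (∀ ε : ℝ, 0 < ε → ∃ α : ℕ → ℝ, (∀ i < m, 0 ≤ α i) ∧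
        Metric.infDist (c' + ∑ i ∈ Finset.range m, α i • A i) (PSD n) < ε) ∧
      sInf {r : ℝ | ∃ α : ℕ → ℝ, (∀ i < m, 0 ≤ α i) ∧
        r = Metric.infDist (c' + ∑ i ∈ Finset.range m, α i • A i) (PSD n)} = 0 := by
  have hmono : ∀ j < m, N j ≤ N (j + 1) := fun j _ => by rw [hNsucc j]; omega
  have hypc : ∀ v : Fin n → ℝ, (∀ p : Fin n, p.1 < N m → v p = 0) → 0 ≤ v ⬝ᵥ c' *ᵥ v := by
    intro v hv
    have hv' : ∀ p : Fin n, p.1 < N m ∨ n ≤ p.1 → v p = 0 := by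
      intro p hp
      rcases hp with hp | hp
      · exact hv p hp
      · exact absurd p.2 (by omega)
    rw [quad_restr hNm le_rfl c' v hv']
    have h := hc'blk.dotProduct_mulVec_nonneg (restr n (N m) n v)
    rwa [star_eq_self] at h
  have main : ∀ ε : ℝ, 0 < ε → ∃ α : ℕ → ℝ, (∀ i < m, 0 ≤ α i) ∧
      Metric.infDist (c' + ∑ i ∈ Finset.range m, α i • A i) (PSD n) < ε := by
    intro ε hε
    set c1 : ℝ := ‖(1 : MS n)‖ with hc1
    have hc1n : 0 ≤ c1 := norm_nonneg _
    set ε₀ : ℝ := ε / (c1 + 1) with hε₀def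
    have hε₀ : 0 < ε₀ := by positivity
    obtain ⟨α, hα0, hα⟩ := key n m N A c' hmono hNm hstair hypc ε₀ hε₀
    refine ⟨α, hα0, ?_⟩
    set M : MS n := c' + ∑ i ∈ Finset.range m, α i • A i with hMdef
    have hsymm : Mᵀ = M := by
      have hs : (∑ i ∈ Finset.range m, α i • A i)ᵀ = ∑ i ∈ Finset.range m, α i • A i := by
        rw [Matrix.transpose_sum]
        refine Finset.sum_congr rfl fun i hi => ?_
        rw [Matrix.transpose_smul, hAsymm i (Finset.mem_range.mp hi)]
      rw [hMdef, Matrix.transpose_add, hc', hs]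
    have hzmem : (M + ε₀ • (1 : MS n)) ∈ PSD n := by
      refine Matrix.PosSemidef.of_dotProduct_mulVec_nonneg ?_ ?_
      · show (M + ε₀ • (1 : MS n))ᴴ = _
        rw [Matrix.conjTranspose_eq_transpose_of_trivial, Matrix.transpose_add, hsymm,
          Matrix.transpose_smul, Matrix.transpose_one]
      · intro x
        rw [star_eq_self]
        have h1 := hα x (fun p hp => absurd hp (by omega))
        rw [Matrix.add_mulVec, dotProduct_add, Matrix.smul_mulVec, Matrix.one_mulVec,
          dotProduct_smul, smul_eq_mul]
        linarith
    have hd : dist M (M + ε₀ • (1 : MS n)) = ε₀ * c1 := by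
      rw [dist_eq_norm, show M - (M + ε₀ • (1 : MS n)) = -(ε₀ • (1 : MS n)) by abel,
        norm_neg, norm_smul, Real.norm_eq_abs, abs_of_pos hε₀]
    calc Metric.infDist M (PSD n) ≤ dist M (M + ε₀ • (1 : MS n)) :=
          Metric.infDist_le_dist_of_mem hzmem
      _ = ε₀ * c1 := hd
      _ < ε := by
          have he : ε₀ * (c1 + 1) = ε := by
            rw [hε₀def]; field_simp
          nlinarith
  refine ⟨main, ?_⟩
  have hSne : {r : ℝ | ∃ α : ℕ → ℝ, (∀ i < m, 0 ≤ α i) ∧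
      r = Metric.infDist (c' + ∑ i ∈ Finset.range m, α i • A i) (PSD n)}.Nonempty :=
    ⟨_, ⟨fun _ => 0, fun i _ => le_rfl, rfl⟩⟩
  have hlb : ∀ r ∈ {r : ℝ | ∃ α : ℕ → ℝ, (∀ i < m, 0 ≤ α i) ∧
      r = Metric.infDist (c' + ∑ i ∈ Finset.range m, α i • A i) (PSD n)}, (0:ℝ) ≤ r := by
    rintro r ⟨α, hα, rfl⟩
    exact Metric.infDist_nonneg
  refine le_antisymm ?_ (le_csInf hSne hlb)
  refine le_of_forall_pos_le_add ?_
  intro ε hε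
  obtain ⟨α, hα0, hαd⟩ := main ε hε
  have hmem : Metric.infDist (c' + ∑ i ∈ Finset.range m, α i • A i) (PSD n) ∈
      {r : ℝ | ∃ α : ℕ → ℝ, (∀ i < m, 0 ≤ α i) ∧
      r = Metric.infDist (c' + ∑ i ∈ Finset.range m, α i • A i) (PSD n)} := ⟨α, hα0, rfl⟩
  calc sInf {r : ℝ | ∃ α : ℕ → ℝ, (∀ i < m, 0 ≤ α i) ∧
      r = Metric.infDist (c' + ∑ i ∈ Finset.range m, α i • A i) (PSD n)}
      ≤ Metric.infDist (c' + ∑ i ∈ Finset.range m, α i • A i) (PSD n) :=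
        csInf_le ⟨0, hlb⟩ hmem
    _ ≤ 0 + ε := by linarith
end
end

section
/- Let L ⊆ S_n be a linear subspace, c ∈ S_n, 0 < k and 0 ≤ l < n−k. Assume: (1) the subproblem π̄_k(K_n,L,c) is weakly feasible, i.e. π̄_k(L+c) contains a positive semidefinite matrix but no positive definite matrix; and (2) every positive semidefinite matrix in π̄_k(L+c) has the block form [[A, 0],[0, 0]] with A an l×l positive semidefinite matrix. If there is no x ∈ L+c all of whose entries outside the upper-left (k+l)×(k+l) block vanish, then (L+c) ∩ K_n = ∅, i.e. (K_n,L,c) is infeasible. -/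
open Matrix

attribute [local instance] Matrix.frobeniusNormedAddCommGroup

noncomputable section

def affSet {n : ℕ} (L : Submodule ℝ (MS n)) (c : MS n) : Set (MS n) :=
  {x | ∃ l ∈ L, x = l + c}

lemma psd_row_zero {m : ℕ} {x : Matrix (Fin m) (Fin m) ℝ} (hx : x.PosSemidef)
    {j : Fin m} (hj : x j j = 0) (i : Fin m) : x i j = 0 := by
  by_cases hij : i = j
  · subst hij; exact hj
  have hsym : x j i = x i j := by
    have := congrFun (congrFun hx.1 j) i
    simpa [Matrix.conjTranspose_apply] using this.symm
  have key : ∀ t : ℝ, 0 ≤ x i i * (t * t) + (2 * x i j) * t + 0 := by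
    intro t
    have h := hx.dotProduct_mulVec_nonneg (Pi.single i t + Pi.single j 1)
    simp only [star_trivial, Matrix.mulVec_add, Matrix.mulVec_single, dotProduct_add,
      add_dotProduct, dotProduct_single] at h
    simp [Pi.single_apply, hij, Ne.symm hij, hsym] at h
    nlinarith [h]
  have := discrim_le_zero key
  have h2 : (2 * x i j) ^ 2 ≤ 0 := by
    rw [discrim] at this; nlinarith
  nlinarith [sq_nonneg (x i j)]

/-- Assume: (1) the subproblem `π̄_k(K_n, L, c)`, with affine feasible set
`π̄_k(L+c)`, is weakly feasible (contains a positive semidefinite but no positive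
definite matrix); (2) every positive semidefinite matrix in `π̄_k(L+c)` has the block
form `[[A, 0], [0, 0]]` with `A` an `l×l` positive semidefinite matrix. If no
`x ∈ L + c` has all entries outside the upper-left `(k+l)×(k+l)` block vanishing,
then `(L+c) ∩ K_n = ∅`, i.e. `(K_n, L, c)` is infeasible. -/
theorem stmt17 (n k l : ℕ) (hk : 0 < k) (hl : k + l < n)
    (L : Submodule ℝ (MS n)) (hL : ∀ y ∈ L, y.IsSymm) (c : MS n) (hc : c.IsSymm)
    (hfeas : ∃ u ∈ blk n k n '' affSet L c, u.PosSemidef)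
    (hnotstrict : ¬ ∃ u ∈ blk n k n '' affSet L c, u.PosDef)
    (hface : ∀ u ∈ blk n k n '' affSet L c, u.PosSemidef →
      (blk (n - k) 0 l u).PosSemidef ∧
        ∀ i j : Fin (n - k), (l ≤ i.1 ∨ l ≤ j.1) → u i j = 0)
    (hE : ¬ ∃ x ∈ affSet L c,
      ∀ i j : Fin n, (k + l ≤ i.1 ∨ k + l ≤ j.1) → x i j = 0) :
    ¬ ∃ x ∈ affSet L c, x.PosSemidef := by
  rintro ⟨x, hx, hpsd⟩
  set f : Fin (n - k) → Fin n := fun i => ⟨k + i.1, by have := i.2; omega⟩ with hf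
  have hblk : blk n k n x = x.submatrix f f := by
    ext i j
    have hi : k + i.1 < n := by have := i.2; omega
    have hj : k + j.1 < n := by have := j.2; omega
    simp [blk, f, hi, hj]
  have hub : (blk n k n x).PosSemidef := by
    rw [hblk]; exact hpsd.submatrix f
  obtain ⟨-, hzero⟩ := hface _ ⟨x, hx, rfl⟩ hub
  -- entries x a b with a,b ≥ k and (a ≥ k+l or b ≥ k+l) vanish
  have hdiag : ∀ a : Fin n, k + l ≤ a.1 → x a a = 0 := by
    intro a ha
    have ha2 : a.1 - k < n - k := by have := a.2; omega
    have := hzero ⟨a.1 - k, ha2⟩ ⟨a.1 - k, ha2⟩ (Or.inl (by simp; omega))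
    have hc : k + (a.1 - k) < n := by have := a.2; omega
    simp only [blk, hc, and_self, dif_pos] at this
    have heq : (⟨k + (a.1 - k), hc⟩ : Fin n) = a := Fin.ext (by simp; omega)
    rwa [heq] at this
  have hall : ∀ i j : Fin n, (k + l ≤ i.1 ∨ k + l ≤ j.1) → x i j = 0 := by
    intro i j hij
    rcases hij with h | h
    · have hrow : x j i = 0 := psd_row_zero hpsd (hdiag i h) j
      have hsym : x i j = x j i := by
        have := congrFun (congrFun hpsd.1 i) j
        simpa [Matrix.conjTranspose_apply] using this.symm
      rw [hsym, hrow]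
    · exact psd_row_zero hpsd (hdiag j h) i
  exact hE ⟨x, hx, hall⟩
end
end

section
/- Let L ⊆ S_n be a linear subspace, c ∈ S_n, 0 < k and 0 ≤ l < n−k. Assume: (1) the subproblem π̄_k(K_n,L,c) is weakly feasible, i.e. π̄_k(L+c) contains a positive semidefinite matrix but no positive definite matrix; and (2) every positive semidefinite matrix in π̄_k(L+c) has the block form [[A, 0],[0, 0]] with A an l×l positive semidefinite matrix. Suppose E ∩ (L+c) ≠ ∅, where E = {x ∈ S_n : all entries of x outside the upper-left (k+l)×(k+l) block vanish}. Then (L+c) ∩ K_n ≠ ∅ if and only if there exists x ∈ E ∩ (L+c) whose upper-left (k+l)×(k+l) block π_{k+l}(x) is positive semidefinite. -/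
open Matrix

attribute [local instance] Matrix.frobeniusNormedAddCommGroup

noncomputable section

/-- `E`: the set of `n×n` matrices all of whose entries outside the upper-left
`j×j` block vanish. -/
def upperLeftSupported (n j : ℕ) : Set (MS n) :=
  {x | ∀ i i' : Fin n, (j ≤ i.1 ∨ j ≤ i'.1) → x i i' = 0}

theorem psd_row_zero_s18 {m : ℕ} {M : Matrix (Fin m) (Fin m) ℝ} (h : M.PosSemidef) {i : Fin m}
    (hd : M i i = 0) (j : Fin m) : M i j = 0 := by
  by_cases hij : i = j
  · subst hij; exact hd
  have hsym : M j i = M i j := by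
    have := h.1.apply j i
    simpa using this.symm
  by_contra hne
  have key : ∀ t : ℝ, 0 ≤ 2 * t * M i j + M j j := by
    intro t
    have h0 := h.dotProduct_mulVec_nonneg ((Pi.single i t + Pi.single j 1 : Fin m → ℝ))
    simp only [star_trivial, mulVec_add, add_dotProduct, single_dotProduct,
      mulVec_single, Pi.add_apply, Pi.smul_apply, op_smul_eq_mul, col_apply, mul_one, one_mul] at h0
    have : t * (M i i * t + M i j) + (M j i * t + M j j) = 2 * t * M i j + M j j := by
      rw [hd, hsym]; ring
    linarith [h0, this.symm.le]
  have h1 := key (-(M j j + 1) / (2 * M i j))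
  have h2 : 2 * (-(M j j + 1) / (2 * M i j)) * M i j = -(M j j + 1) := by
    field_simp
  rw [h2] at h1
  linarith

theorem blk_eq_submatrix (n a b : ℕ) (hb : b ≤ n) (x : MS n) :
    blk n a b x = x.submatrix (fun i : Fin (b - a) => (⟨a + i.1, by omega⟩ : Fin n))
      (fun j : Fin (b - a) => (⟨a + j.1, by omega⟩ : Fin n)) := by
  funext i j
  have hi := i.2
  have hj := j.2
  rw [blk, dif_pos ⟨by omega, by omega⟩]
  rfl

/-- Assume: (1) the subproblem `π̄_k(K_n, L, c)`, with affine feasible set `π̄_k(L+c)`,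
is weakly feasible (contains a positive semidefinite but no positive definite matrix);
(2) every positive semidefinite matrix in `π̄_k(L+c)` has the block form
`[[A, 0], [0, 0]]` with `A` an `l×l` positive semidefinite matrix. If
`E ∩ (L+c) ≠ ∅`, where `E` consists of the matrices supported on the upper-left
`(k+l)×(k+l)` block, then `(L+c) ∩ K_n ≠ ∅` iff some `x ∈ E ∩ (L+c)` has positive
semidefinite upper-left `(k+l)×(k+l)` block `π_{k+l}(x)`. -/
theorem stmt18 (n k l : ℕ) (hk : 0 < k) (hl : k + l < n)
    (L : Submodule ℝ (MS n)) (hL : ∀ y ∈ L, y.IsSymm) (c : MS n) (hc : c.IsSymm)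
    (hfeas : ∃ u ∈ blk n k n '' affSet L c, u.PosSemidef)
    (hnotstrict : ¬ ∃ u ∈ blk n k n '' affSet L c, u.PosDef)
    (hface : ∀ u ∈ blk n k n '' affSet L c, u.PosSemidef →
      (blk (n - k) 0 l u).PosSemidef ∧
        ∀ i j : Fin (n - k), (l ≤ i.1 ∨ l ≤ j.1) → u i j = 0)
    (hE : (upperLeftSupported n (k + l) ∩ affSet L c).Nonempty) :
    (∃ x ∈ affSet L c, x.PosSemidef) ↔
      ∃ x ∈ upperLeftSupported n (k + l) ∩ affSet L c,
        (blk n 0 (k + l) x).PosSemidef := by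
  set m := k + l with hm
  have hmn : m ≤ n := hl.le
  -- the embedding of the upper-left block
  have hblk0 : ∀ x : MS n, blk n 0 m x
      = x.submatrix (fun i : Fin (m - 0) => (⟨0 + i.1, by omega⟩ : Fin n))
        (fun j : Fin (m - 0) => (⟨0 + j.1, by omega⟩ : Fin n)) :=
    fun x => blk_eq_submatrix n 0 m hmn x
  constructor
  · rintro ⟨x, hx, hpsd⟩
    -- the lower-right (n-k) block of x
    have hbu : blk n k n x = x.submatrix
        (fun i : Fin (n - k) => (⟨k + i.1, by omega⟩ : Fin n))
        (fun j : Fin (n - k) => (⟨k + j.1, by omega⟩ : Fin n)) :=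
      blk_eq_submatrix n k n le_rfl x
    have hupsd : (blk n k n x).PosSemidef := by
      rw [hbu]; exact hpsd.submatrix _
    have hmem : blk n k n x ∈ blk n k n '' affSet L c := ⟨x, hx, rfl⟩
    have hz := (hface _ hmem hupsd).2
    -- diagonal entries beyond m vanish
    have hdiag : ∀ i : Fin n, m ≤ i.1 → x i i = 0 := by
      intro i hi
      have hik : k ≤ i.1 := le_trans (Nat.le_add_right k l) hi
      have h2 := hz ⟨i.1 - k, by omega⟩ ⟨i.1 - k, by omega⟩ (Or.inl (show l ≤ i.1 - k by omega))
      rw [hbu] at h2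
      simpa [Matrix.submatrix, show k + (i.1 - k) = i.1 by omega, Fin.eta] using h2
    have hrow : ∀ i j : Fin n, m ≤ i.1 → x i j = 0 := fun i j hi =>
      psd_row_zero_s18 hpsd (hdiag i hi) j
    have hsupp : x ∈ upperLeftSupported n m := by
      intro i i' hii'
      rcases hii' with hi | hi'
      · exact hrow i i' hi
      · have h0 := hrow i' i hi'
        have hsym := hpsd.1.apply i i'
        simpa [h0] using hsym.symm
    refine ⟨x, ⟨hsupp, hx⟩, ?_⟩
    rw [hblk0]
    exact hpsd.submatrix _
  · rintro ⟨x, ⟨hsupp, hx⟩, hApsd⟩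
    refine ⟨x, hx, ?_⟩
    -- x is symmetric
    have hxsymm : x.IsSymm := by
      obtain ⟨y, hy, rfl⟩ := hx
      exact (hL y hy).add hc
    rw [posSemidef_iff_dotProduct_mulVec]
    constructor
    · rw [Matrix.IsHermitian, conjTranspose_eq_transpose_of_trivial]
      exact hxsymm
    · intro v
      rw [star_trivial]
      -- the embedding
      set f : Fin (m - 0) → Fin n := fun i => (⟨0 + i.1, by omega⟩ : Fin n) with hf
      have hfinj : Function.Injective f := by
        intro a b hab
        apply Fin.ext
        have h1 := congrArg Fin.val hab
        simpa [hf] using h1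
      set s : Finset (Fin n) := Finset.univ.map ⟨f, hfinj⟩ with hs
      have hmem_s : ∀ i : Fin n, i ∈ s ↔ i.1 < m := by
        intro i
        simp only [hs, Finset.mem_map, Finset.mem_univ, true_and,
          Function.Embedding.coeFn_mk]
        constructor
        · rintro ⟨a, rfl⟩
          simpa [hf] using a.2
        · intro hi
          exact ⟨⟨i.1, by omega⟩, by apply Fin.ext; simp [hf]⟩
      have key : v ⬝ᵥ x *ᵥ v = (fun i => v (f i)) ⬝ᵥ (blk n 0 m x) *ᵥ (fun i => v (f i)) := by
        rw [hblk0]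
        unfold dotProduct mulVec dotProduct
        rw [← Finset.sum_subset (Finset.subset_univ s) (by
          intro i _ hi
          have hmi : m ≤ i.1 := by
            by_contra hcon
            exact hi ((hmem_s i).2 (by omega))
          have : ∀ j, x i j = 0 := fun j => hsupp i j (Or.inl hmi)
          simp [this])]
        rw [hs, Finset.sum_map]
        apply Finset.sum_congr rfl
        intro i _
        congr 1
        rw [← Finset.sum_subset (Finset.subset_univ s) (by
          intro j _ hj
          have hmj : m ≤ j.1 := by
            by_contra hcon
            exact hj ((hmem_s j).2 (by omega))
          have : x (f i) j = 0 := hsupp (f i) j (Or.inr hmj)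
          simp [this])]
        rw [hs, Finset.sum_map]
        rfl
      rw [key]
      have h9 := hApsd.dotProduct_mulVec_nonneg (fun i => v (f i))
      simp only [star_trivial] at h9
      exact h9
end
end

section
/- Let L+c ⊆ S_3 be the affine set of all matrices [[t, 1, s],[1, s, 1],[s, 1, 0]] with t, s ∈ ℝ (so L is the span of A₁ = [[1,0,0],[0,0,0],[0,0,0]] and A₂ = [[0,0,1],[0,1,0],[1,0,0]]). Then: (i) (L+c) ∩ K_3 = ∅ and dist(K_3, L+c) = 0, i.e. the problem is weakly infeasible; and (ii) the problem is not directionally weakly infeasible: for every nonzero d ∈ L ∩ K_3 and every x ∈ L+c there exists δ > 0 such that dist(x + t d, K_3) ≥ δ for all t ≥ 0; in particular dist(x + t d, K_3) does not tend to 0 as t → +∞. -/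
open Matrix

attribute [local instance] Matrix.frobeniusNormedAddCommGroup

noncomputable section

/-- `dist(C, D) = inf {‖x − y‖ : x ∈ C, y ∈ D}` in the Frobenius norm. -/
def sdist {m : ℕ} (C D : Set (MS m)) : ℝ := sInf (Set.image2 dist C D)

/-- The affine set `L + c` of all matrices `[[t,1,s],[1,s,1],[s,1,0]]`, `t, s ∈ ℝ`. -/
def exAff : Set (MS 3) :=
  {x | ∃ t s : ℝ, x = !![t, 1, s; 1, s, 1; s, 1, 0]}

/-- The subspace `L` spanned by `A₁ = [[1,0,0],[0,0,0],[0,0,0]]` and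
`A₂ = [[0,0,1],[0,1,0],[1,0,0]]`. -/
def exL : Submodule ℝ (MS 3) :=
  Submodule.span ℝ {!![1, 0, 0; 0, 0, 0; 0, 0, 0], !![0, 0, 1; 0, 1, 0; 1, 0, 0]}

/-- Every entry of a matrix is bounded by its Frobenius norm. -/
lemma entry_abs_le (M : MS 3) (i j : Fin 3) : |M i j| ≤ ‖M‖ := by
  rw [Matrix.frobenius_norm_def, ← Real.sqrt_eq_rpow]
  rw [show |M i j| = Real.sqrt (|M i j| ^ 2) by rw [Real.sqrt_sq (abs_nonneg _)]]
  apply Real.sqrt_le_sqrt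
  have h1 : ∀ a b : Fin 3, (0:ℝ) ≤ ‖M a b‖ ^ (2:ℝ) := fun a b => Real.rpow_nonneg (norm_nonneg _) _
  calc |M i j| ^ 2 = ‖M i j‖ ^ (2:ℝ) := by
        rw [Real.rpow_two]; simp [Real.norm_eq_abs]
    _ ≤ ∑ b, ‖M i b‖ ^ (2:ℝ) := Finset.single_le_sum (fun b _ => h1 i b) (Finset.mem_univ j)
    _ ≤ ∑ a, ∑ b, ‖M a b‖ ^ (2:ℝ) :=
        Finset.single_le_sum (fun a _ => Finset.sum_nonneg fun b _ => h1 a b) (Finset.mem_univ i)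

lemma psd_quad {z : MS 3} (hz : z.PosSemidef) (v : Fin 3 → ℝ) : 0 ≤ v ⬝ᵥ z *ᵥ v := by
  simpa using hz.dotProduct_mulVec_nonneg v

/-- Key lower bound: the distance from any matrix in the affine set (with parameter `s`)
to any PSD matrix is at least `1/(1 + |s+1|/2)^2`. -/
lemma key_s19 (t s : ℝ) {z : MS 3} (hz : z.PosSemidef) :
    1 / (1 + |s + 1| / 2)^2 ≤ dist (!![t,1,s;1,s,1;s,1,0] : MS 3) z := by
  set y : MS 3 := !![t,1,s;1,s,1;s,1,0] with hy
  set b : ℝ := -((s+1)/2) with hb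
  set n : ℝ := ‖z - y‖ with hn
  have hq : 0 ≤ z 1 1 + z 1 2 * b + b * (z 2 1 + z 2 2 * b) := by
    simpa [dotProduct, mulVec, Fin.sum_univ_three] using psd_quad hz ![0,1,b]
  have hw : ∀ i j : Fin 3, |z i j - y i j| ≤ n := by
    intro i j
    have := entry_abs_le (z - y) i j
    simpa [Matrix.sub_apply] using this
  have e11 := hw 1 1
  have e12 := hw 1 2
  have e21 := hw 2 1
  have e22 := hw 2 2
  have hy11 : y 1 1 = s := by simp [hy]
  have hy12 : y 1 2 = 1 := by simp [hy]
  have hy21 : y 2 1 = 1 := by simp [hy]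
  have hy22 : y 2 2 = 0 := by simp [hy]
  rw [hy11] at e11; rw [hy12] at e12; rw [hy21] at e21; rw [hy22] at e22
  have hbn : b * (z 1 2 - 1) ≤ |b| * n := by
    calc b * (z 1 2 - 1) ≤ |b * (z 1 2 - 1)| := le_abs_self _
      _ = |b| * |z 1 2 - 1| := abs_mul _ _
      _ ≤ |b| * n := by gcongr
  have hbn' : b * (z 2 1 - 1) ≤ |b| * n := by
    calc b * (z 2 1 - 1) ≤ |b * (z 2 1 - 1)| := le_abs_self _
      _ = |b| * |z 2 1 - 1| := abs_mul _ _
      _ ≤ |b| * n := by gcongr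
  have hb2 : b * (b * (z 2 2 - 0)) ≤ |b|^2 * n := by
    calc b * (b * (z 2 2 - 0)) ≤ |b * (b * (z 2 2 - 0))| := le_abs_self _
      _ = |b| * (|b| * |z 2 2 - 0|) := by rw [abs_mul, abs_mul]
      _ ≤ |b| * (|b| * n) := by gcongr
      _ = |b|^2 * n := by ring
  have h11 : z 1 1 - s ≤ n := (le_abs_self _).trans e11
  have hkey : 1 ≤ n * (1 + |b|)^2 := by
    have hs2b : s + 2*b = -1 := by rw [hb]; ring
    nlinarith [hq, hbn, hbn', hb2, h11, abs_nonneg b, sq_abs b]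
  have hpos : (0:ℝ) < (1 + |b|)^2 := by positivity
  rw [dist_eq_norm, norm_sub_rev, ← hn]
  have habs : |s+1|/2 = |b| := by rw [hb, abs_neg, abs_div]; norm_num
  rw [habs, div_le_iff₀ hpos]
  exact hkey

lemma norm_single (c : ℝ) : ‖(!![0,0,0;0,0,0;0,0,c] : MS 3)‖ = |c| := by
  rw [Matrix.frobenius_norm_def, ← Real.sqrt_eq_rpow]
  simp [Fin.sum_univ_three, Real.rpow_two, Real.sqrt_sq_eq_abs, Real.norm_eq_abs, sq_abs]

/-- A PSD matrix agreeing with a member of the affine set except at the bottom corner. -/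
lemma gram (r : ℝ) (hr : 0 < r) :
    ∃ z : MS 3, z.PosSemidef ∧
      z = !![(2/r^3)^2 + (r - 2/r^3)^2, 1, 2/r^2; 1, 2/r^2, 1; 2/r^2, 1, r^2] := by
  have hr0 : r ≠ 0 := ne_of_gt hr
  refine ⟨(!![2/r^3, r - 2/r^3; 1/r, 1/r; r, 0] : Matrix (Fin 3) (Fin 2) ℝ) *
      (!![2/r^3, r - 2/r^3; 1/r, 1/r; r, 0])ᴴ,
    Matrix.posSemidef_self_mul_conjTranspose _, ?_⟩
  ext i j
  fin_cases i <;> fin_cases j <;>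
    · simp [Matrix.mul_apply, Fin.sum_univ_two, Matrix.conjTranspose_apply, Matrix.vecHead,
        Matrix.vecTail]
      try field_simp
      try ring

lemma d_struct {d : MS 3} (hd : d ∈ exL) (hpsd : d.PosSemidef) (hne : d ≠ 0) :
    ∃ m : ℝ, 0 < m ∧ d = !![m,0,0;0,0,0;0,0,0] := by
  rw [exL, Submodule.mem_span_pair] at hd
  obtain ⟨m, n, hmn⟩ := hd
  have hde : d = !![m, 0, n; 0, n, 0; n, 0, 0] := by
    rw [← hmn]; ext i j; fin_cases i <;> fin_cases j <;> simp [Matrix.vecHead, Matrix.vecTail]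
  have hn0 : n = 0 := by
    by_contra h
    have := psd_quad hpsd ![1, 0, -(m+1)/(2*n)]
    rw [hde] at this
    simp [dotProduct, mulVec, Fin.sum_univ_three, Matrix.vecHead, Matrix.vecTail] at this
    have h2 : n * ((-1 + -m)/(2*n)) = (-1 + -m)/2 := by field_simp
    rw [mul_comm ((-1 + -m)/(2*n)) n, h2] at this
    linarith
  have hm0 : 0 ≤ m := by
    have := psd_quad hpsd ![1, 0, 0]
    rw [hde] at this
    simpa [dotProduct, mulVec, Fin.sum_univ_three] using this
  have hmne : m ≠ 0 := by
    intro h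
    apply hne
    rw [hde, hn0, h]
    ext i j; fin_cases i <;> fin_cases j <;> simp [Matrix.vecHead, Matrix.vecTail]
  exact ⟨m, lt_of_le_of_ne hm0 (Ne.symm hmne), by rw [hde, hn0]⟩

lemma aff_step (t₀ s tt m : ℝ) :
    (!![t₀,1,s;1,s,1;s,1,0] : MS 3) + tt • (!![m,0,0;0,0,0;0,0,0] : MS 3)
      = !![t₀ + tt*m,1,s;1,s,1;s,1,0] := by
  ext i j
  fin_cases i <;> fin_cases j <;>
    simp [Matrix.add_apply, Matrix.vecHead, Matrix.vecTail] <;> try ring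

lemma psd_zero_mem : (0 : MS 3) ∈ PSD 3 := Matrix.PosSemidef.zero

/-- The problem `(K_3, L, c)` of Example 2 is weakly infeasible:
(i) `(L+c) ∩ K_3 = ∅` and `dist(K_3, L+c) = 0`; and (ii) it is not directionally
weakly infeasible: for every nonzero `d ∈ L ∩ K_3` and every `x ∈ L + c` there is
`δ > 0` with `dist(x + t d, K_3) ≥ δ` for all `t ≥ 0`; in particular
`dist(x + t d, K_3)` does not tend to `0` as `t → +∞`. -/
theorem stmt19 :
    ((¬ ∃ x ∈ exAff, x.PosSemidef) ∧ sdist (PSD 3) exAff = 0) ∧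
      (∀ d : MS 3, d ∈ exL → d.PosSemidef → d ≠ 0 → ∀ x ∈ exAff,
        (∃ δ : ℝ, 0 < δ ∧ ∀ t : ℝ, 0 ≤ t → δ ≤ Metric.infDist (x + t • d) (PSD 3)) ∧
          ¬ Filter.Tendsto (fun t : ℝ => Metric.infDist (x + t • d) (PSD 3))
            Filter.atTop (nhds 0)) := by
  have hnonneg : ∀ r ∈ Set.image2 dist (PSD 3) exAff, (0:ℝ) ≤ r := by
    rintro r ⟨a, -, b, -, rfl⟩; exact dist_nonneg
  have hbdd : BddBelow (Set.image2 dist (PSD 3) exAff) := ⟨0, hnonneg⟩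
  have hsmall : ∀ e : ℝ, 0 < e → sdist (PSD 3) exAff ≤ e := by
    intro e he
    set r : ℝ := Real.sqrt (min 1 e) with hrdef
    have hmin : (0:ℝ) < min 1 e := lt_min one_pos he
    have hr : 0 < r := Real.sqrt_pos.mpr hmin
    obtain ⟨z, hzpsd, hz⟩ := gram r hr
    set y : MS 3 := !![(2/r^3)^2 + (r - 2/r^3)^2, 1, 2/r^2; 1, 2/r^2, 1; 2/r^2, 1, 0] with hy
    have hymem : y ∈ exAff := ⟨_, _, rfl⟩
    have hzy : z - y = !![0,0,0;0,0,0;0,0,r^2] := by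
      rw [hz, hy]
      ext i j
      fin_cases i <;> fin_cases j <;> simp [Matrix.vecHead, Matrix.vecTail]
    have hdist : dist z y = r^2 := by
      rw [dist_eq_norm, hzy, norm_single, abs_of_nonneg (sq_nonneg r)]
    have hmem : dist z y ∈ Set.image2 dist (PSD 3) exAff :=
      Set.mem_image2_of_mem hzpsd hymem
    have hle := csInf_le hbdd hmem
    have hr2 : r^2 = min 1 e := by
      rw [hrdef, Real.sq_sqrt (le_of_lt hmin)]
    calc sdist (PSD 3) exAff ≤ dist z y := hle
      _ = min 1 e := by rw [hdist, hr2]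
      _ ≤ e := min_le_right _ _
  constructor
  · constructor
    · rintro ⟨x, ⟨t, s, rfl⟩, hpsd⟩
      have hk := key_s19 t s hpsd
      rw [dist_self] at hk
      have : (0:ℝ) < 1 / (1 + |s + 1| / 2)^2 := by positivity
      linarith
    · refine le_antisymm ?_ (Real.sInf_nonneg hnonneg)
      by_contra h
      push_neg at h
      have := hsmall _ (half_pos h)
      unfold sdist at *
      linarith
  · intro d hdL hdP hdne x hx
    obtain ⟨m, hm, rfl⟩ := d_struct hdL hdP hdne
    obtain ⟨t₀, s, rfl⟩ := hx
    have hne : (PSD 3).Nonempty := ⟨0, psd_zero_mem⟩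
    have hδpos : (0:ℝ) < 1 / (1 + |s + 1| / 2)^2 := by positivity
    have hmain : ∀ t : ℝ, 0 ≤ t →
        1 / (1 + |s + 1| / 2)^2 ≤
          Metric.infDist ((!![t₀,1,s;1,s,1;s,1,0] : MS 3)
            + t • (!![m,0,0;0,0,0;0,0,0] : MS 3)) (PSD 3) := by
      intro t _
      rw [aff_step]
      refine le_of_not_gt fun hlt => ?_
      obtain ⟨z, hzpsd, hzlt⟩ := (Metric.infDist_lt_iff hne).mp hlt
      exact absurd (key_s19 (t₀ + t*m) s hzpsd) (not_le.mpr hzlt)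
    refine ⟨⟨_, hδpos, hmain⟩, fun htend => ?_⟩
    obtain ⟨t, hlt, ht0⟩ :=
      ((htend.eventually (gt_mem_nhds hδpos)).and (Filter.eventually_ge_atTop 0)).exists
    exact absurd (hmain t ht0) (not_le.mpr hlt)
end
end
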